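/- For all integers n ≥ 1 and N ≥ 2, f(n,N) = (max over integers i with 1 ≤ i ≤ ⌈N/2⌉ of f(n−1, i) + f(n−1, N−i+1)) + 1, and the maximum is attained at i = ⌈N/2⌉; that is, f(n,N) = f(n−1, ⌈N/2⌉) + f(n−1, ⌊N/2⌋ + 1) + 1. -/

import Mathlib

/-- The complexity function `f(n,N)`: `2^n - 1` for `n ≤ ⌈log₂ N⌉` and
`(N-1)(n - ⌈log₂ N⌉) + 2^{⌈log₂ N⌉} - 1` for `n ≥ ⌈log₂ N⌉`. -/
def f (n N : ℕ) : ℕ :=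
  if n ≤ Nat.clog 2 N then 2 ^ n - 1
  else (N - 1) * (n - Nat.clog 2 N) + 2 ^ (Nat.clog 2 N) - 1

lemma f_succ (m N : ℕ) (hN : 1 ≤ N) :
    f m (N + 1) = f m N + (m - Nat.clog 2 N) := by
  obtain ⟨L, hL⟩ : ∃ L, Nat.clog 2 N = L := ⟨_, rfl⟩
  obtain ⟨L', hL'⟩ : ∃ L', Nat.clog 2 (N + 1) = L' := ⟨_, rfl⟩
  have hP : 1 ≤ 2 ^ L := Nat.one_le_two_pow
  have hNle : N ≤ 2 ^ L := hL ▸ Nat.le_pow_clog one_lt_two N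
  have hLL' : L ≤ L' := hL ▸ hL' ▸ Nat.clog_mono_right 2 (Nat.le_succ N)
  have hL'le : L' ≤ L + 1 := by
    rw [← hL', Nat.clog_le_iff_le_pow one_lt_two, ← hL, hL, pow_succ]
    omega
  rw [f, f, hL, hL']
  rcases le_or_gt m L with hm | hm
  · rw [if_pos hm, if_pos (hm.trans hLL')]
    omega
  · have hpow : L < L' → N = 2 ^ L := by
      intro h
      have h2 : 2 ^ L < N + 1 := by
        rw [← Nat.lt_clog_iff_pow_lt one_lt_two, hL']
        omega
      omega
    rcases le_or_gt m L' with hm' | hm'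
    · -- L' = L + 1, m = L + 1, N = 2 ^ L
      have hmL : m = L + 1 := by omega
      have hNeq : N = 2 ^ L := hpow (by omega)
      rw [if_pos hm', if_neg (by omega), hmL, hNeq]
      have h1 : L + 1 - L = 1 := by omega
      rw [h1, mul_one]
      have h2 : 2 ^ (L + 1) = 2 * 2 ^ L := pow_succ' 2 L
      omega
    · rw [if_neg (by omega), if_neg (by omega)]
      rcases (show L' = L ∨ L' = L + 1 by omega) with h | h
      · rw [h]
        obtain ⟨k, rfl⟩ : ∃ k, N = k + 1 := ⟨N - 1, by omega⟩
        obtain ⟨d, hd⟩ : ∃ d, m = L + 1 + d := ⟨m - L - 1, by omega⟩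
        subst hd
        have e1 : L + 1 + d - L = d + 1 := by omega
        rw [e1]
        simp only [Nat.add_sub_cancel]
        have e2 : (k + 1) * (d + 1) = k * (d + 1) + (d + 1) := by ring
        rw [e2]
        generalize k * (d + 1) = q
        omega
      · rw [h]
        have hNeq : N = 2 ^ L := hpow (by omega)
        obtain ⟨d, hd⟩ : ∃ d, m = L + 2 + d := ⟨m - L - 2, by omega⟩
        subst hd
        have e1 : L + 2 + d - (L + 1) = d + 1 := by omega
        have e2 : L + 2 + d - L = d + 2 := by omega
        rw [e1, e2, hNeq]
        have e3 : (2 ^ L + 1 - 1) * (d + 1) = 2 ^ L * d + 2 ^ L := by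
          simp; ring
        have e4 : (2 ^ L - 1) * (d + 2) = 2 ^ L * d + 2 * 2 ^ L - (d + 2) := by
          zify [show d + 2 ≤ 2 ^ L * d + 2 * 2 ^ L by nlinarith [hP], hP]
          ring
        have e5 : 2 ^ (L + 1) = 2 * 2 ^ L := pow_succ' 2 L
        rw [e3, e4, e5]
        have hle : d + 2 ≤ 2 ^ L * d + 2 * 2 ^ L := by nlinarith [hP]
        generalize 2 ^ L * d = q at *
        omega

lemma f_one (m : ℕ) : f m 1 = 0 := by
  rw [f, Nat.clog_one_right]
  split
  · have : m = 0 := by omega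
    subst this; rfl
  · simp

lemma f_two (m : ℕ) : f m 2 = m := by
  rw [f, Nat.clog_eq_one le_rfl le_rfl]
  rcases le_or_gt m 1 with h | h
  · rw [if_pos h]
    interval_cases m <;> rfl
  · rw [if_neg (by omega)]
    omega

lemma f_eq2 (N : ℕ) (hN : 2 ≤ N) (m : ℕ) :
    f (m + 1) N = f m ((N + 1) / 2) + f m (N / 2 + 1) + 1 := by
  induction N, hN using Nat.le_induction with
  | base =>
    rw [show (2+1)/2 = 1 from rfl, show 2/2+1 = 2 from rfl, f_one, f_two, f_two]
    omega
  | succ N hN2 ih =>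
    have hc : Nat.clog 2 N = Nat.clog 2 ((N + 1) / 2) + 1 := by
      rw [Nat.clog_of_two_le one_lt_two hN2, show (N + 2 - 1) / 2 = (N + 1) / 2 by omega]
    rcases Nat.even_or_odd N with ⟨k, hk⟩ | ⟨k, hk⟩
    · -- N = 2k
      have hk1 : 1 ≤ k := by omega
      have hNk : N = 2 * k := by omega
      have e1 : (N + 1) / 2 = k := by omega
      have e2 : (N + 2) / 2 = k + 1 := by omega
      have e3 : N / 2 + 1 = k + 1 := by omega
      have e4 : (N + 1) / 2 + 1 = k + 1 := by omega
      have h1 := f_succ (m + 1) N (by omega)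
      have h2 : f m (k + 1) = f m k + (m - Nat.clog 2 k) := f_succ m k hk1
      have ihm := ih
      rw [e1, e3] at ihm
      rw [e1] at hc
      rw [hc] at h1
      rw [e2, e4, h1, ihm]
      omega
    · -- N = 2k+1
      have hk1 : 1 ≤ k := by omega
      have e1 : (N + 1) / 2 = k + 1 := by omega
      have e2 : (N + 2) / 2 = k + 1 := by omega
      have e3 : N / 2 + 1 = k + 1 := by omega
      have e4 : (N + 1) / 2 + 1 = k + 2 := by omega
      have h1 := f_succ (m + 1) N (by omega)
      have h2 : f m (k + 2) = f m (k + 1) + (m - Nat.clog 2 (k + 1)) := f_succ m (k + 1) (by omega)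
      have ihm := ih
      rw [e1, e3] at ihm
      rw [e1] at hc
      rw [hc] at h1
      rw [e2, e4, h1, ihm]
      omega

lemma f_concave (m a b : ℕ) (ha : 1 ≤ a) (hab : a ≤ b) :
    f m a + f m (b + 1) ≤ f m (a + 1) + f m b := by
  rw [f_succ m a ha, f_succ m b (ha.trans hab)]
  have := Nat.clog_mono_right 2 hab
  omega

lemma g_mono (m N : ℕ) (d : ℕ) : ∀ i, 1 ≤ i → 2 * (i + d) ≤ N + 1 →
    f m i + f m (N - i + 1) ≤ f m (i + d) + f m (N - (i + d) + 1) := by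
  induction d with
  | zero => intro i _ _; exact le_rfl
  | succ d ih =>
    intro i hi hid
    have step : f m i + f m (N - i + 1) ≤ f m (i + 1) + f m (N - (i + 1) + 1) := by
      have hab : i ≤ N - i := by omega
      have e : N - (i + 1) + 1 = N - i := by omega
      rw [e]
      exact f_concave m i (N - i) hi hab
    have := ih (i + 1) (by omega) (by omega)
    have e2 : i + 1 + d = i + (d + 1) := by omega
    rw [e2] at this
    exact step.trans this

theorem f_recursion (n N : ℕ) (hn : 1 ≤ n) (hN : 2 ≤ N) :
    f n N = (Finset.Icc 1 ((N + 1) / 2)).sup (fun i => f (n - 1) i + f (n - 1) (N - i + 1)) + 1 ∧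
    f n N = f (n - 1) ((N + 1) / 2) + f (n - 1) (N / 2 + 1) + 1 := by
  obtain ⟨m, rfl⟩ : ∃ m, n = m + 1 := ⟨n - 1, by omega⟩
  simp only [Nat.add_sub_cancel]
  set K := (N + 1) / 2 with hK
  have hK1 : 1 ≤ K := by omega
  have eq2 : f (m + 1) N = f m K + f m (N / 2 + 1) + 1 := f_eq2 N hN m
  have hNK : N - K + 1 = N / 2 + 1 := by omega
  have hsup : (Finset.Icc 1 K).sup (fun i => f m i + f m (N - i + 1))
      = f m K + f m (N - K + 1) := by
    apply le_antisymm
    · apply Finset.sup_le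
      intro i hi
      simp only [Finset.mem_Icc] at hi
      have := g_mono m N (K - i) i hi.1 (by omega)
      rwa [show i + (K - i) = K by omega] at this
    · exact Finset.le_sup (f := fun i => f m i + f m (N - i + 1))
        (Finset.mem_Icc.2 ⟨hK1, le_rfl⟩)
  rw [hsup, hNK]
  exact ⟨eq2, eq2⟩
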